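/- Let T₁ and T₂ be n-ary Γ-semirings. The product T₁ × T₂ with componentwise addition and componentwise n-ary multiplication is an n-ary Γ-semiring, and every prime Γ-ideal of T₁ × T₂ containing one of the factor ideals T₁ × {0} or {0} × T₂ is of the form P₁ × T₂ or T₁ × P₂ for a prime Γ-ideal Pᵢ of Tᵢ, provided {0} is absorbing (so T₁ × {0} and {0} × T₂ are Γ-ideals) and the primes are subtractive. -/
import Mathlib


universe u v w

/-- An `n`-ary `Γ`-semiring: a commutative monoid `T` together with an operation
`μ : Tⁿ × Γ^{n-1} → T`, additive in each `T`-slot, with `0` absorbing in each slot. -/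
structure NGS (T : Type u) (Γ : Type v) (n : ℕ) [AddCommMonoid T] where
  mu : (Fin n → T) → (Fin (n - 1) → Γ) → T
  mu_add : ∀ (x : Fin n → T) (γ : Fin (n - 1) → Γ) (j : Fin n) (a b : T),
    mu (Function.update x j (a + b)) γ
      = mu (Function.update x j a) γ + mu (Function.update x j b) γ
  mu_zero : ∀ (x : Fin n → T) (γ : Fin (n - 1) → Γ) (j : Fin n), x j = 0 → mu x γ = 0

variable {T : Type u} {Γ : Type v} {n : ℕ} [AddCommMonoid T]

/-- A `Γ`-ideal: an additive submonoid absorbing in every slot of `μ`. -/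
structure IsGammaIdeal (S : NGS T Γ n) (I : Set T) : Prop where
  zero_mem : (0 : T) ∈ I
  add_mem : ∀ a b : T, a ∈ I → b ∈ I → a + b ∈ I
  mu_mem : ∀ (x : Fin n → T) (γ : Fin (n - 1) → Γ) (j : Fin n), x j ∈ I → S.mu x γ ∈ I

/-- A prime `Γ`-ideal: a proper `Γ`-ideal `P` with `[x₁,…,xₙ]_γ⃗ ∈ P → ∃ j, xⱼ ∈ P`. -/
structure IsPrimeGammaIdeal (S : NGS T Γ n) (P : Set T) : Prop where
  isIdeal : IsGammaIdeal S P
  proper : P ≠ Set.univ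
  prime : ∀ (x : Fin n → T) (γ : Fin (n - 1) → Γ), S.mu x γ ∈ P → ∃ j, x j ∈ P

/-- The `Γ`-spectrum: the set of prime `Γ`-ideals. -/
def SpecGamma (S : NGS T Γ n) : Type u := {P : Set T // IsPrimeGammaIdeal S P}

/-- The zero set `V(I) = {P ∈ Spec_Γ(T) : I ⊆ P}`. -/
def V (S : NGS T Γ n) (I : Set T) : Set (SpecGamma S) := {P | I ⊆ P.1}

/-- The `Γ`-ideal generated by a subset. -/
def genIdeal (S : NGS T Γ n) (A : Set T) : Set T := ⋂₀ {I | IsGammaIdeal S I ∧ A ⊆ I}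

/-- The `Γ`-Zariski topology on `Spec_Γ(T)`, generated by complements of zero sets. -/
def zariskiTop (S : NGS T Γ n) : TopologicalSpace (SpecGamma S) :=
  TopologicalSpace.generateFrom {U | ∃ I, IsGammaIdeal S I ∧ U = (V S I)ᶜ}

/-- A morphism of `n`-ary `Γ`-semirings. -/
structure NGSHom {T' : Type w} [AddCommMonoid T'] (S : NGS T Γ n) (S' : NGS T' Γ n)
    (f : T → T') : Prop where
  map_zero : f 0 = 0
  map_add : ∀ a b : T, f (a + b) = f a + f b
  map_mu : ∀ (x : Fin n → T) (γ : Fin (n - 1) → Γ), f (S.mu x γ) = S'.mu (f ∘ x) γ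

/-- An identity family `(e, δ⃗)`: `[x,e,…,e]_δ⃗ = x` for all `x`. -/
def IsIdentityFamily [NeZero n] (S : NGS T Γ n) (e : T) (δ : Fin (n - 1) → Γ) : Prop :=
  ∀ x : T, S.mu (Function.update (fun _ => e) 0 x) δ = x

/-- Commutativity: `μ` is symmetric in the `T`-arguments. -/
def IsCommutative (S : NGS T Γ n) : Prop :=
  ∀ (x : Fin n → T) (γ : Fin (n - 1) → Γ) (σ : Equiv.Perm (Fin n)), S.mu (x ∘ σ) γ = S.mu x γ

/-- A multiplicatively closed subset (containing `e`). -/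
def MultClosed (S : NGS T Γ n) (e : T) (A : Set T) : Prop :=
  e ∈ A ∧ ∀ (x : Fin n → T) (γ : Fin (n - 1) → Γ), (∀ k, x k ∈ A) → S.mu x γ ∈ A

/-- The binary contraction `x·y = [x,y,e,…,e]_δ⃗` (needs `n ≥ 2`). -/
def cdot (S : NGS T Γ n) (hn : 1 < n) (e : T) (δ : Fin (n - 1) → Γ) (x y : T) : T :=
  S.mu (fun k => if k = ⟨0, Nat.lt_of_succ_lt hn⟩ then x else if k = ⟨1, hn⟩ then y else e) δ

/-- A maximal `Γ`-ideal. -/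
def IsMaximalGammaIdeal (S : NGS T Γ n) (M : Set T) : Prop :=
  IsGammaIdeal S M ∧ M ≠ Set.univ ∧
    ∀ J, IsGammaIdeal S J → J ≠ Set.univ → M ⊆ J → J = M

/-- Subtractive (`k`-ideal) condition. -/
def IsSubtractive (I : Set T) : Prop := ∀ x i : T, i ∈ I → x + i ∈ I → x ∈ I

/-- the product of two `n`-ary `Γ`-semirings is an `n`-ary
`Γ`-semiring, and subtractive primes containing a factor ideal are of the form
`P₁ × T₂` or `T₁ × P₂`. -/
theorem product_structure_and_primes {T₁ : Type u} {T₂ : Type u}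
    [AddCommMonoid T₁] [AddCommMonoid T₂]
    (S₁ : NGS T₁ Γ n) (S₂ : NGS T₂ Γ n) :
    ∃ Q : NGS (T₁ × T₂) Γ n,
      (∀ (x : Fin n → T₁ × T₂) (γ : Fin (n - 1) → Γ),
        Q.mu x γ = (S₁.mu (fun k => (x k).1) γ, S₂.mu (fun k => (x k).2) γ)) ∧
      ∀ P : Set (T₁ × T₂), IsPrimeGammaIdeal Q P → IsSubtractive P →
        ((Set.univ ×ˢ ({0} : Set T₂) ⊆ P →
            ∃ P₂ : Set T₂, IsPrimeGammaIdeal S₂ P₂ ∧ P = Set.univ ×ˢ P₂) ∧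
         (({0} : Set T₁) ×ˢ Set.univ ⊆ P →
            ∃ P₁ : Set T₁, IsPrimeGammaIdeal S₁ P₁ ∧ P = P₁ ×ˢ Set.univ)) := by

  classical
  refine ⟨⟨fun x γ => (S₁.mu (fun k => (x k).1) γ, S₂.mu (fun k => (x k).2) γ,),
      ?_, ?_⟩, fun x γ => rfl, ?_⟩
  · intro x γ j a b
    have h1 : ∀ (c : T₁ × T₂), (fun k => (Function.update x j c k).1)
        = Function.update (fun k => (x k).1) j c.1 := by
      intro c; funext k
      rcases eq_or_ne k j with h | h
      · subst h; simp
      · simp [Function.update_of_ne h]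
    have h2 : ∀ (c : T₁ × T₂), (fun k => (Function.update x j c k).2)
        = Function.update (fun k => (x k).2) j c.2 := by
      intro c; funext k
      rcases eq_or_ne k j with h | h
      · subst h; simp
      · simp [Function.update_of_ne h]
    simp only [h1, h2]
    exact Prod.ext (S₁.mu_add _ γ j a.1 b.1) (S₂.mu_add _ γ j a.2 b.2)
  · intro x γ j hj
    have e1 : (x j).1 = 0 := by rw [hj]; rfl
    have e2 : (x j).2 = 0 := by rw [hj]; rfl
    exact Prod.ext (S₁.mu_zero _ γ j e1) (S₂.mu_zero _ γ j e2)
  · intro P hP hsub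
    constructor
    · intro hcont
      set P₂ : Set T₂ := {y | ((0 : T₁), y) ∈ P} with hP₂
      have hmem : ∀ a b, (a, b) ∈ P ↔ b ∈ P₂ := by
        intro a b
        constructor
        · intro h
          have ha0 : (a, (0 : T₂)) ∈ P := hcont (by simp)
          have : ((0 : T₁), b) + (a, (0 : T₂)) ∈ P := by
            have : ((0 : T₁), b) + (a, (0 : T₂)) = (a, b) := by simp [Prod.ext_iff]
            rwa [this]
          exact hsub _ _ ha0 this
        · intro h
          have ha0 : (a, (0 : T₂)) ∈ P := hcont (by simp)
          have := hP.isIdeal.add_mem _ _ h ha0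
          have e : ((0 : T₁), b) + (a, (0 : T₂)) = (a, b) := by simp [Prod.ext_iff]
          rwa [e] at this
      have hPeq : P = Set.univ ×ˢ P₂ := by
        ext ⟨a, b⟩; simp [hmem a b]
      refine ⟨P₂, ⟨⟨?_, ?_, ?_⟩, ?_, ?_⟩, hPeq⟩
      · exact hP.isIdeal.zero_mem
      · intro a b ha hb
        have := hP.isIdeal.add_mem _ _ ha hb
        have e : ((0 : T₁), a) + ((0 : T₁), b) = ((0 : T₁), a + b) := by
          simp [Prod.ext_iff]
        rwa [e] at this
      · intro x γ j hj
        have := hP.isIdeal.mu_mem (fun k => ((0 : T₁), x k)) γ j hj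
        exact (hmem _ _).1 this
      · intro hu
        apply hP.proper
        ext ⟨a, b⟩
        simp [hmem a b, hu]
      · intro x γ hx
        have : (fun k => (((0 : T₁), x k) : T₁ × T₂)) =
            (fun k => (((0 : T₁), x k) : T₁ × T₂)) := rfl
        have hmu : (S₁.mu (fun _ => (0 : T₁)) γ, S₂.mu x γ) ∈ P := (hmem _ _).2 hx
        obtain ⟨j, hj⟩ := hP.prime (fun k => ((0 : T₁), x k)) γ hmu
        exact ⟨j, hj⟩
    · intro hcont
      set P₁ : Set T₁ := {y | (y, (0 : T₂)) ∈ P} with hP₁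
      have hmem : ∀ a b, (a, b) ∈ P ↔ a ∈ P₁ := by
        intro a b
        constructor
        · intro h
          have hb0 : ((0 : T₁), b) ∈ P := hcont (by simp)
          have : (a, (0 : T₂)) + ((0 : T₁), b) ∈ P := by
            have : (a, (0 : T₂)) + ((0 : T₁), b) = (a, b) := by simp [Prod.ext_iff]
            rwa [this]
          exact hsub _ _ hb0 this
        · intro h
          have hb0 : ((0 : T₁), b) ∈ P := hcont (by simp)
          have := hP.isIdeal.add_mem _ _ h hb0
          have e : (a, (0 : T₂)) + ((0 : T₁), b) = (a, b) := by simp [Prod.ext_iff]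
          rwa [e] at this
      have hPeq : P = P₁ ×ˢ Set.univ := by
        ext ⟨a, b⟩; simp [hmem a b]
      refine ⟨P₁, ⟨⟨?_, ?_, ?_⟩, ?_, ?_⟩, hPeq⟩
      · exact hP.isIdeal.zero_mem
      · intro a b ha hb
        have := hP.isIdeal.add_mem _ _ ha hb
        have e : ((a : T₁), (0 : T₂)) + ((b : T₁), (0 : T₂)) = (a + b, (0 : T₂)) := by
          simp [Prod.ext_iff]
        rwa [e] at this
      · intro x γ j hj
        have := hP.isIdeal.mu_mem (fun k => (x k, (0 : T₂))) γ j hj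
        exact (hmem _ _).1 this
      · intro hu
        apply hP.proper
        ext ⟨a, b⟩
        simp [hmem a b, hu]
      · intro x γ hx
        have hmu : (S₁.mu x γ, S₂.mu (fun _ => (0 : T₂)) γ) ∈ P := (hmem _ _).2 hx
        obtain ⟨j, hj⟩ := hP.prime (fun k => (x k, (0 : T₂))) γ hmu
        exact ⟨j, hj⟩
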